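/- Let S be a finite set of size n, and let φ be any function mapping subsets of S to a totally ordered set. For a subset R ⊆ S, define the violators V(R) = {s ∈ S \ R : φ(R ∪ {s}) ≠ φ(R)} and the extreme elements X(R) = {s ∈ R : φ(R) ≠ φ(R \ {s})}. Let v_r be the expected size of V(R) over uniformly random subsets R of size r, and x_{r+1} the expected size of X(Q) over uniformly random subsets Q of size r+1. Then for 0 ≤ r < n, v_r/(n−r) = x_{r+1}/(r+1). -/

import Mathlib

open Finset

/-- Sampling Lemma: v_r/(n-r) = x_{r+1}/(r+1), where v_r (resp. x_{r+1}) is the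
expected number of violators (resp. extreme elements) of a uniformly random
subset of size r (resp. r+1). -/
theorem sampling_lemma {α β : Type*} [DecidableEq α] [DecidableEq β]
    (S : Finset α) (n : ℕ) (hn : S.card = n) (φ : Finset α → β)
    (r : ℕ) (hr : r < n) :
    ((∑ R ∈ S.powersetCard r,
        (((S \ R).filter (fun s => φ (insert s R) ≠ φ R)).card : ℝ)) / (n.choose r))
      / ((n : ℝ) - r) =
    ((∑ Q ∈ S.powersetCard (r + 1),
        ((Q.filter (fun s => φ Q ≠ φ (Q.erase s))).card : ℝ)) / (n.choose (r + 1)))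
      / ((r : ℝ) + 1) := by
  classical
  have key : ∑ R ∈ S.powersetCard r,
        ((S \ R).filter (fun s => φ (insert s R) ≠ φ R)).card
      = ∑ Q ∈ S.powersetCard (r + 1),
        (Q.filter (fun s => φ Q ≠ φ (Q.erase s))).card := by
    rw [← Finset.card_sigma, ← Finset.card_sigma]
    apply Finset.card_bij' (fun p _ => (⟨insert p.2 p.1, p.2⟩ : Σ _ : Finset α, α))
      (fun p _ => (⟨p.1.erase p.2, p.2⟩ : Σ _ : Finset α, α))
    · rintro ⟨R, s⟩ hp
      simp only [Finset.mem_sigma, Finset.mem_powersetCard, Finset.mem_filter,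
        Finset.mem_sdiff] at hp ⊢
      obtain ⟨⟨hRS, hRc⟩, ⟨hsS, hsR⟩, hφ⟩ := hp
      have herase : (insert s R).erase s = R := Finset.erase_insert hsR
      refine ⟨⟨?_, ?_⟩, Finset.mem_insert_self _ _, ?_⟩
      · exact Finset.insert_subset hsS hRS
      · rw [Finset.card_insert_of_notMem hsR, hRc]
      · rw [herase]; exact fun h => hφ h
    · rintro ⟨Q, s⟩ hp
      simp only [Finset.mem_sigma, Finset.mem_powersetCard, Finset.mem_filter,
        Finset.mem_sdiff] at hp ⊢
      obtain ⟨⟨hQS, hQc⟩, hsQ, hφ⟩ := hp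
      have hins : insert s (Q.erase s) = Q := Finset.insert_erase hsQ
      refine ⟨⟨(Finset.erase_subset _ _).trans hQS, ?_⟩,
        ⟨hQS hsQ, Finset.notMem_erase _ _⟩, ?_⟩
      · rw [Finset.card_erase_of_mem hsQ, hQc]; rfl
      · rw [hins]; exact fun h => hφ h
    · rintro ⟨R, s⟩ hp
      simp only [Finset.mem_sigma, Finset.mem_powersetCard, Finset.mem_filter,
        Finset.mem_sdiff] at hp
      obtain ⟨_, ⟨_, hsR⟩, _⟩ := hp
      simp [Finset.erase_insert hsR]
    · rintro ⟨Q, s⟩ hp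
      simp only [Finset.mem_sigma, Finset.mem_powersetCard, Finset.mem_filter,
        Finset.mem_sdiff] at hp
      obtain ⟨_, hsQ, _⟩ := hp
      simp [Finset.insert_erase hsQ]
  have keyR : (∑ R ∈ S.powersetCard r,
        (((S \ R).filter (fun s => φ (insert s R) ≠ φ R)).card : ℝ))
      = ∑ Q ∈ S.powersetCard (r + 1),
        ((Q.filter (fun s => φ Q ≠ φ (Q.erase s))).card : ℝ) := by
    exact_mod_cast key
  have hrn : r ≤ n := hr.le
  have h1 : (n.choose r : ℝ) * ((n : ℝ) - r) = (n.choose (r + 1) : ℝ) * ((r : ℝ) + 1) := by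
    have h := Nat.choose_succ_right_eq n r
    have hcast : ((n.choose (r + 1) : ℝ)) * ((r : ℝ) + 1)
        = (n.choose r : ℝ) * (((n - r : ℕ) : ℝ)) := by exact_mod_cast h
    rw [Nat.cast_sub hrn] at hcast
    linarith
  rw [div_div, div_div, keyR, h1]
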